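/- The skew Clifford algebra sCl(μ, B) has 𝕜-vector-space dimension exactly 2^n if and only if condition (★) holds. (Theorem 3.10, equivalence (b) ⇔ (c).) -/

import Mathlib

open FreeAlgebra

/-- `μ` is multiplicatively antisymmetric: `μ i j * μ j i = 1` and `μ i i = 1`. -/
def MulAntisym {𝕜 : Type*} [Field 𝕜] {n : ℕ} (μ : Fin n → Fin n → 𝕜) : Prop :=
  ∀ i j, μ i j * μ j i = 1 ∧ μ i i = 1

/-- `B` is `μ`-symmetric: `B i j = μ i j * B j i`. -/
def MuSymm {𝕜 : Type*} [Field 𝕜] {n : ℕ} (μ B : Fin n → Fin n → 𝕜) : Prop :=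
  ∀ i j, B i j = μ i j * B j i

/-- Condition (★): for all `i, j` with `B i j ≠ 0`, one has `μ i k = μ k j` for all `k`. -/
def StarCond {𝕜 : Type*} [Field 𝕜] {n : ℕ} (μ B : Fin n → Fin n → 𝕜) : Prop :=
  ∀ i j, B i j ≠ 0 → ∀ k, μ i k = μ k j

/-- The defining relations of the skew Clifford algebra: identifying
`x_i x_j + μ i j • (x_j x_i)` with `(2 * B i j) • 1`, which amounts to quotienting the free
algebra by the two-sided ideal generated by
`x_i x_j + μ i j • (x_j x_i) - (2 * B i j) • 1`. -/
inductive sClRel (𝕜 : Type*) [Field 𝕜] (n : ℕ) (μ B : Fin n → Fin n → 𝕜) :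
    FreeAlgebra 𝕜 (Fin n) → FreeAlgebra 𝕜 (Fin n) → Prop
  | rel (i j : Fin n) : sClRel 𝕜 n μ B
      (ι 𝕜 i * ι 𝕜 j + μ i j • (ι 𝕜 j * ι 𝕜 i))
      ((2 * B i j) • (1 : FreeAlgebra 𝕜 (Fin n)))

/-- The skew Clifford algebra `sCl(μ, B)`. -/
abbrev sCl (𝕜 : Type*) [Field 𝕜] (n : ℕ) (μ B : Fin n → Fin n → 𝕜) : Type _ :=
  RingQuot (sClRel 𝕜 n μ B)

/-- The image `x̄_i` of the generator `x_i` in the skew Clifford algebra. -/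
noncomputable def sClGen (𝕜 : Type*) [Field 𝕜] (n : ℕ) (μ B : Fin n → Fin n → 𝕜)
    (i : Fin n) : sCl 𝕜 n μ B :=
  RingQuot.mkAlgHom 𝕜 (sClRel 𝕜 n μ B) (ι 𝕜 i)
namespace SCL

variable {𝕜 : Type*} [Field 𝕜] {n : ℕ} (μ B : Fin n → Fin n → 𝕜)

local notation "gen" => sClGen 𝕜 n μ B

lemma gen_rel (i j : Fin n) :
    gen i * gen j + μ i j • (gen j * gen i) = (2 * B i j) • (1 : sCl 𝕜 n μ B) := by
  have h := RingQuot.mkAlgHom_rel 𝕜 (sClRel.rel (μ := μ) (B := B) i j)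
  simpa [map_add, map_mul, map_smul, map_one, sClGen] using h

lemma gen_mul (i j : Fin n) :
    gen i * gen j = (2 * B i j) • (1 : sCl 𝕜 n μ B) - μ i j • (gen j * gen i) := by
  rw [eq_sub_iff_add_eq]; exact gen_rel μ B i j

lemma gen_sq (hchar : (2:𝕜) ≠ 0) (hμ : MulAntisym μ) (i : Fin n) :
    gen i * gen i = (B i i) • (1 : sCl 𝕜 n μ B) := by
  have h := gen_rel μ B i i
  rw [(hμ i i).2, one_smul] at h
  have h2 : (2:𝕜) • (gen i * gen i) = (2:𝕜) • ((B i i) • (1 : sCl 𝕜 n μ B)) := by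
    rw [two_smul, smul_smul]
    exact h
  exact smul_right_injective _ hchar h2
end SCL

namespace SCL
open Finset Submodule

variable {𝕜 : Type*} [Field 𝕜] {n : ℕ} (μ B : Fin n → Fin n → 𝕜)

local notation "gen" => sClGen 𝕜 n μ B

noncomputable def mono (S : Finset (Fin n)) : sCl 𝕜 n μ B :=
  ((S.sort (· ≤ ·)).map gen).prod

lemma mono_empty : mono μ B (∅ : Finset (Fin n)) = 1 := by simp [mono]

lemma mono_insert {a : Fin n} {S : Finset (Fin n)} (h : ∀ b ∈ S, a < b) :
    mono μ B (insert a S) = gen a * mono μ B S := by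
  have ha : a ∉ S := fun hm => absurd (h a hm) (lt_irrefl a)
  rw [mono, Finset.sort_insert (r := (· ≤ ·)) (fun b hb => (h b hb).le) ha]
  simp [mono]

lemma mono_singleton (a : Fin n) : mono μ B ({a} : Finset (Fin n)) = gen a := by
  simp [mono]

lemma gen_mul_mono_mem (hchar : (2:𝕜) ≠ 0) (hμ : MulAntisym μ) (S : Finset (Fin n)) :
    ∀ i : Fin n, gen i * mono μ B S ∈
      span 𝕜 (mono μ B '' {T : Finset (Fin n) | T ⊆ insert i S}) := by
  induction S using Finset.strongInduction with
  | _ S ih =>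
  intro i
  rcases S.eq_empty_or_nonempty with rfl | hS
  · rw [mono_empty, mul_one]
    refine subset_span ⟨{i}, by simp, mono_singleton μ B i⟩
  · set m := S.min' hS with hm
    have hmem : m ∈ S := S.min'_mem hS
    have hstrict : ∀ t ∈ S.erase m, m < t := fun t ht =>
      lt_of_le_of_ne (S.min'_le t (Finset.mem_of_mem_erase ht))
        (Ne.symm (Finset.ne_of_mem_erase ht))
    have hSm : S = insert m (S.erase m) := (Finset.insert_erase hmem).symm
    have hmonoS : mono μ B S = gen m * mono μ B (S.erase m) := by
      conv_lhs => rw [hSm]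
      exact mono_insert μ B hstrict
    rcases lt_trichotomy i m with him | him | him
    · have hiS : ∀ b ∈ S, i < b := fun b hb => lt_of_lt_of_le him (S.min'_le b hb)
      rw [← mono_insert μ B hiS]
      exact subset_span ⟨insert i S, Set.mem_setOf_eq ▸ subset_rfl, rfl⟩
    · subst him
      rw [hmonoS, ← mul_assoc, gen_sq μ B hchar hμ, smul_mul_assoc, one_mul]
      refine smul_mem _ _ (subset_span ⟨S.erase m, ?_, rfl⟩)
      exact fun t ht => Finset.mem_insert_of_mem (Finset.mem_of_mem_erase ht)
    · rw [hmonoS, ← mul_assoc, gen_mul, sub_mul, smul_mul_assoc, one_mul, smul_mul_assoc,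
        mul_assoc]
      have h1 := ih (S.erase m) (Finset.erase_ssubset hmem) i
      have h2 : gen m * (gen i * mono μ B (S.erase m)) ∈
          span 𝕜 (mono μ B '' {T : Finset (Fin n) | T ⊆ insert i S}) := by
        refine span_induction ?_ ?_ ?_ ?_ h1
        · rintro w ⟨T, hT, rfl⟩
          have hTm : ∀ t ∈ T, m < t := by
            intro t ht
            rcases Finset.mem_insert.mp (hT ht) with rfl | h'
            · exact him
            · exact hstrict t h'
          rw [← mono_insert μ B hTm]
          refine subset_span ⟨insert m T, ?_, rfl⟩
          intro t ht
          rcases Finset.mem_insert.mp ht with rfl | h'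
          · rw [hSm]; exact Finset.mem_insert_of_mem (Finset.mem_insert_self _ _)
          · rcases Finset.mem_insert.mp (hT h') with rfl | h''
            · exact Finset.mem_insert_self _ _
            · exact Finset.mem_insert_of_mem (Finset.mem_of_mem_erase h'')
        · simp
        · intro x y _ _ hx hy
          rw [mul_add]; exact add_mem hx hy
        · intro c x _ hx
          rw [mul_smul_comm]; exact smul_mem _ _ hx
      refine sub_mem (smul_mem _ _ (subset_span ⟨S.erase m, ?_, rfl⟩)) (smul_mem _ _ h2)
      exact fun t ht => Finset.mem_insert_of_mem (Finset.mem_of_mem_erase ht)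

lemma span_mono_eq_top (hchar : (2:𝕜) ≠ 0) (hμ : MulAntisym μ) :
    span 𝕜 (Set.range (mono μ B)) = ⊤ := by
  have hadj : Algebra.adjoin 𝕜 (Set.range gen) = ⊤ := by
    have hr : Set.range gen =
        (RingQuot.mkAlgHom 𝕜 (sClRel 𝕜 n μ B)) '' (Set.range (FreeAlgebra.ι 𝕜)) := by
      rw [← Set.range_comp]; rfl
    rw [hr, ← AlgHom.map_adjoin, FreeAlgebra.adjoin_range_ι, Algebra.map_top]
    exact (AlgHom.range_eq_top _).mpr
      (RingQuot.mkAlgHom_surjective 𝕜 (sClRel 𝕜 n μ B))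
  set W := span 𝕜 (Set.range (mono μ B)) with hW
  have hmul : ∀ g ∈ Submonoid.closure (Set.range gen), ∀ w ∈ W, g * w ∈ W := by
    intro g hg
    induction hg using Submonoid.closure_induction with
    | mem x hx =>
      obtain ⟨i, rfl⟩ := hx
      intro w hw
      refine span_induction ?_ ?_ ?_ ?_ hw
      · rintro v ⟨S, rfl⟩
        exact span_mono (Set.image_subset_range _ _) (gen_mul_mono_mem μ B hchar hμ S i)
      · simp
      · intro x y _ _ hx hy; rw [mul_add]; exact add_mem hx hy
      · intro c x _ hx; rw [mul_smul_comm]; exact smul_mem _ _ hx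
    | one => intro w hw; rwa [one_mul]
    | mul x y _ _ hx hy =>
      intro w hw
      rw [mul_assoc]
      exact hx _ (hy _ hw)
  have hone : (1 : sCl 𝕜 n μ B) ∈ W := by
    rw [← mono_empty μ B]; exact subset_span ⟨∅, rfl⟩
  rw [eq_top_iff]
  intro a _
  have ha : a ∈ Subalgebra.toSubmodule (Algebra.adjoin 𝕜 (Set.range gen)) := by
    rw [hadj]; trivial
  rw [Algebra.adjoin_eq_span] at ha
  refine span_le.mpr ?_ ha
  intro g hg
  have := hmul g hg 1 hone
  rwa [mul_one] at this

end SCL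

namespace SCL
open Finset Submodule Finsupp

variable {𝕜 : Type*} [Field 𝕜] {n : ℕ} (μ B : Fin n → Fin n → 𝕜)

/-- The representation space. -/
abbrev V (𝕜 : Type*) [Field 𝕜] (n : ℕ) : Type _ := Finset (Fin n) →₀ 𝕜

noncomputable def evec (S : Finset (Fin n)) : V 𝕜 n := Finsupp.single S 1

/-- Product of `-μ i t` over elements `t` of `S` below cutoff `c`. -/
def cpf (i c : Fin n) (S : Finset (Fin n)) : 𝕜 := ∏ t ∈ S.filter (· < c), (-μ i t)

/-- The vector `x_i · e_S` in normal form. -/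
noncomputable def xvec (i : Fin n) (S : Finset (Fin n)) : V 𝕜 n :=
  Finsupp.single (if i ∈ S then S.erase i else insert i S)
      ((if i ∈ S then B i i else 1) * cpf μ i i S)
    + ∑ s ∈ S.filter (· < i), Finsupp.single (S.erase s) (2 * B i s * cpf μ i s S)

noncomputable def Xop (i : Fin n) : V 𝕜 n →ₗ[𝕜] V 𝕜 n :=
  Finsupp.lsum 𝕜 fun S => LinearMap.toSpanSingleton 𝕜 _ (xvec μ B i S)

noncomputable def Kop (m : Fin n) : V 𝕜 n →ₗ[𝕜] V 𝕜 n :=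
  Finsupp.lsum 𝕜 fun T => LinearMap.toSpanSingleton 𝕜 _ (evec (insert m T))

@[simp] lemma Xop_single (i : Fin n) (S : Finset (Fin n)) (a : 𝕜) :
    Xop μ B i (Finsupp.single S a) = a • xvec μ B i S := by
  simp [Xop, LinearMap.toSpanSingleton_apply]

@[simp] lemma Xop_evec (i : Fin n) (S : Finset (Fin n)) :
    Xop μ B i (evec S) = xvec μ B i S := by
  simp [evec]

@[simp] lemma Kop_single (m : Fin n) (T : Finset (Fin n)) (a : 𝕜) :
    Kop (𝕜 := 𝕜) (n := n) m (Finsupp.single T a) = a • evec (insert m T) := by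
  simp [Kop, LinearMap.toSpanSingleton_apply]

@[simp] lemma Kop_evec (m : Fin n) (T : Finset (Fin n)) :
    Kop (𝕜 := 𝕜) (n := n) m (evec T) = evec (insert m T) := by
  simp [evec]

lemma xvec_fresh {i : Fin n} {T : Finset (Fin n)} (hT : ∀ t ∈ T, i < t) :
    xvec μ B i T = evec (insert i T) := by
  have hiT : i ∉ T := fun h => lt_irrefl i (hT i h)
  have hfilt : T.filter (· < i) = ∅ := by
    rw [Finset.filter_eq_empty_iff]
    intro t ht
    exact not_lt.mpr (hT t ht).le
  rw [xvec, if_neg hiT, if_neg hiT, cpf, hfilt]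
  simp [evec]

lemma xvec_self {i : Fin n} {T : Finset (Fin n)} (hT : ∀ t ∈ T, i < t) :
    xvec μ B i (insert i T) = (B i i) • evec T := by
  have hiT : i ∉ T := fun h => lt_irrefl i (hT i h)
  have hfilt : (insert i T).filter (· < i) = ∅ := by
    rw [Finset.filter_insert, if_neg (lt_irrefl i), Finset.filter_eq_empty_iff]
    intro t ht
    exact not_lt.mpr (hT t ht).le
  rw [xvec, if_pos (Finset.mem_insert_self i T), hfilt, cpf, hfilt,
    Finset.erase_insert hiT]
  simp [evec, Finsupp.smul_single]

/-- The key structural lemma: inserting a new minimum `m` into `S`. -/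
lemma xvec_insert_min {m i : Fin n} {T : Finset (Fin n)} (hmi : m < i)
    (hT : ∀ t ∈ T, m < t) :
    xvec μ B i (insert m T) =
      (-μ i m) • Kop m (xvec μ B i T) + (2 * B i m) • evec T := by
  have hmT : m ∉ T := fun h => lt_irrefl m (hT m h)
  have him : i ≠ m := hmi.ne'
  have hfilt : ∀ c : Fin n, m < c →
      (insert m T).filter (· < c) = insert m (T.filter (· < c)) := by
    intro c hc
    rw [Finset.filter_insert, if_pos hc]
  have hmf : ∀ c : Fin n, m ∉ T.filter (· < c) := by
    intro c hc
    exact hmT (Finset.mem_of_mem_filter m hc)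
  have hcpf : ∀ c : Fin n, m < c → cpf μ i c (insert m T) = (-μ i m) * cpf μ i c T := by
    intro c hc
    rw [cpf, hfilt c hc, Finset.prod_insert (hmf c), cpf]
  have hfiltm : (insert m T).filter (· < m) = ∅ := by
    rw [Finset.filter_insert, if_neg (lt_irrefl m), Finset.filter_eq_empty_iff]
    intro t ht
    exact not_lt.mpr (hT t ht).le
  have hcpfm : cpf μ i m (insert m T) = 1 := by rw [cpf, hfiltm, Finset.prod_empty]
  have hmem : (i ∈ insert m T) ↔ (i ∈ T) := by
    simp [Finset.mem_insert, him]
  have hcoef : (if i ∈ insert m T then B i i else 1) = (if i ∈ T then B i i else 1) := by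
    by_cases hi : i ∈ T
    · rw [if_pos (hmem.mpr hi), if_pos hi]
    · rw [if_neg (fun h => hi (hmem.mp h)), if_neg hi]
  have hlead : (if i ∈ insert m T then (insert m T).erase i else insert i (insert m T))
      = insert m (if i ∈ T then T.erase i else insert i T) := by
    by_cases hi : i ∈ T
    · rw [if_pos (hmem.mpr hi), if_pos hi, Finset.erase_insert_of_ne him.symm]
    · rw [if_neg (fun h => hi (hmem.mp h)), if_neg hi, Finset.insert_comm]
  have hcross : ∑ s ∈ T.filter (· < i),
        Finsupp.single ((insert m T).erase s) (2 * B i s * cpf μ i s (insert m T)) =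
      ∑ s ∈ T.filter (· < i),
        Finsupp.single (insert m (T.erase s)) (-μ i m * (2 * B i s * cpf μ i s T)) := by
    refine Finset.sum_congr rfl (fun s hs => ?_)
    obtain ⟨hsT, _⟩ := Finset.mem_filter.mp hs
    have hms : m < s := hT s hsT
    rw [Finset.erase_insert_of_ne hms.ne, hcpf s hms]
    congr 1
    ring
  -- expand LHS
  rw [xvec, hfilt i hmi, Finset.sum_insert (hmf i), hlead, hcoef, hcpf i hmi, hcpfm,
    Finset.erase_insert hmT, hcross]
  -- expand RHS
  have hleadc : (if i ∈ T then B i i else 1) * (-μ i m * cpf μ i i T) =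
      -μ i m * ((if i ∈ T then B i i else 1) * cpf μ i i T) := by ring
  rw [xvec, map_add, map_sum, Kop_single]
  simp only [Kop_single, smul_add, Finset.smul_sum, Finsupp.smul_single, smul_eq_mul, evec,
    mul_one, smul_smul]
  rw [hleadc]
  abel

end SCL

namespace SCL
open Finset Submodule

variable {𝕜 : Type*} [Field 𝕜] {n : ℕ} (μ B : Fin n → Fin n → 𝕜)

noncomputable def Pm (m : Fin n) : Submodule 𝕜 (V 𝕜 n) :=
  span 𝕜 {v | ∃ T : Finset (Fin n), ∃ a : 𝕜, (∀ t ∈ T, m < t) ∧ v = Finsupp.single T a}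

lemma single_mem_Pm {m : Fin n} {T : Finset (Fin n)} (hT : ∀ t ∈ T, m < t) (a : 𝕜) :
    Finsupp.single T a ∈ Pm (𝕜 := 𝕜) m :=
  subset_span ⟨T, a, hT, rfl⟩

lemma evec_mem_Pm {m : Fin n} {T : Finset (Fin n)} (hT : ∀ t ∈ T, m < t) :
    evec (𝕜 := 𝕜) T ∈ Pm (𝕜 := 𝕜) m :=
  single_mem_Pm hT 1

lemma xvec_mem_Pm {m i : Fin n} {S : Finset (Fin n)} (hmi : m < i) (hS : ∀ t ∈ S, m < t) :
    xvec μ B i S ∈ Pm (𝕜 := 𝕜) m := by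
  rw [xvec]
  refine add_mem (single_mem_Pm ?_ _) (Submodule.sum_mem _ fun s hs => single_mem_Pm ?_ _)
  · intro t ht
    by_cases hiS : i ∈ S
    · rw [if_pos hiS] at ht
      exact hS t (Finset.mem_of_mem_erase ht)
    · rw [if_neg hiS] at ht
      rcases Finset.mem_insert.mp ht with rfl | h'
      · exact hmi
      · exact hS t h'
  · exact fun t ht => hS t (Finset.mem_of_mem_erase ht)

lemma Xop_Kop {m i : Fin n} (hmi : m < i) :
    ∀ v ∈ Pm (𝕜 := 𝕜) m, Xop μ B i (Kop m v) =
      (-μ i m) • Kop m (Xop μ B i v) + (2 * B i m) • v := by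
  intro v hv
  refine span_induction ?_ ?_ ?_ ?_ hv
  · rintro w ⟨T, a, hT, rfl⟩
    rw [Kop_single, map_smul, Xop_evec, xvec_insert_min μ B hmi hT, Xop_single]
    rw [smul_add, map_smul]
    rw [smul_comm a, smul_comm a]
    congr 1
    rw [evec, Finsupp.smul_single, smul_eq_mul, mul_one]
  · simp
  · intro x y _ _ hx hy
    simp only [map_add, smul_add, hx, hy]
    abel
  · intro c x _ hx
    simp only [map_smul, hx, smul_add, smul_comm c]

lemma Xop_Kop_self {i : Fin n} :
    ∀ v ∈ Pm (𝕜 := 𝕜) i, Xop μ B i (Kop i v) = (B i i) • v := by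
  intro v hv
  refine span_induction ?_ ?_ ?_ ?_ hv
  · rintro w ⟨T, a, hT, rfl⟩
    rw [Kop_single, map_smul, Xop_evec, xvec_self μ B hT, smul_comm a]
    congr 1
    rw [evec, Finsupp.smul_single, smul_eq_mul, mul_one]
  · simp
  · intro x y _ _ hx hy
    simp only [map_add, smul_add, hx, hy]
  · intro c x _ hx
    simp only [map_smul, hx, smul_comm c]

lemma Xop_eq_Kop {i : Fin n} :
    ∀ v ∈ Pm (𝕜 := 𝕜) i, Xop μ B i v = Kop i v := by
  intro v hv
  refine span_induction ?_ ?_ ?_ ?_ hv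
  · rintro w ⟨T, a, hT, rfl⟩
    rw [Kop_single, Xop_single, xvec_fresh μ B hT]
  · simp
  · intro x y _ _ hx hy
    simp only [map_add, hx, hy]
  · intro c x _ hx
    simp only [map_smul, hx]

section Rel

variable (hμ : MulAntisym μ) (hB : MuSymm μ B) (hstar : StarCond μ B)
include hμ hB hstar

lemma Bsymm (i j : Fin n) : B i j = B j i := by
  by_cases hb : B j i = 0
  · rw [hB i j, hb, mul_zero]
  · have h1 : μ j i = 1 := by
      have h := hstar j i hb j
      rw [(hμ j j).2] at h
      exact h.symm
    have h2 : μ i j = 1 := by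
      have h := (hμ i j).1
      rwa [h1, mul_one] at h
    rw [hB i j, h2, one_mul]

lemma xrel_le (i j : Fin n) (hij : i ≤ j) (S : Finset (Fin n)) :
    Xop μ B i (xvec μ B j S) + μ i j • Xop μ B j (xvec μ B i S) =
      (2 * B i j) • evec S := by
  induction S using Finset.strongInduction with
  | _ S ih =>
  by_cases hmin : ∃ m ∈ S, m < i
  · -- Case A : peel off the minimum, which is smaller than both i and j
    obtain ⟨m0, hm0S, hm0i⟩ := hmin
    have hS : S.Nonempty := ⟨m0, hm0S⟩
    set m := S.min' hS with hmdef
    have hmi : m < i := lt_of_le_of_lt (S.min'_le m0 hm0S) hm0i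
    have hmj : m < j := lt_of_lt_of_le hmi hij
    set T := S.erase m with hTdef
    have hTm : ∀ t ∈ T, m < t := fun t ht =>
      lt_of_le_of_ne (S.min'_le t (Finset.mem_of_mem_erase ht))
        (Ne.symm (Finset.ne_of_mem_erase ht))
    have hSm : S = insert m T := (Finset.insert_erase (S.min'_mem hS)).symm
    have hIH := ih T (hTdef ▸ Finset.erase_ssubset (S.min'_mem hS))
    rw [hSm, xvec_insert_min μ B hmj hTm, xvec_insert_min μ B hmi hTm]
    rw [map_add, map_add, map_smul, map_smul, map_smul, map_smul]
    rw [Xop_Kop μ B hmi _ (xvec_mem_Pm μ B hmj hTm),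
        Xop_Kop μ B hmj _ (xvec_mem_Pm μ B hmi hTm)]
    rw [Xop_evec, Xop_evec]
    -- scalar identities
    have h1 : (-μ i m) * (-μ j m) * (2 * B i j) = 2 * B i j := by
      by_cases hb : B i j = 0
      · rw [hb]; ring
      · have hs := hstar i j hb m
        have hm := (hμ j m).1
        linear_combination (2 * B i j * μ j m) * hs + (2 * B i j) * hm
    have h2 : (-μ j m) * (2 * B i m) + μ i j * (2 * B i m) = 0 := by
      by_cases hb : B i m = 0
      · rw [hb]; ring
      · have hs := hstar i m hb j
        rw [hs]; ring
    have h3 : (2 * B j m) + μ i j * ((-μ i m) * (2 * B j m)) = 0 := by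
      by_cases hb : B j m = 0
      · rw [hb]; ring
      · have hs := hstar j m hb i
        have hh := (hμ i j).1
        linear_combination (2 * B j m * μ i j) * hs - (2 * B j m) * hh
    calc (-μ j m) • ((-μ i m) • Kop m (Xop μ B i (xvec μ B j T))
            + (2 * B i m) • xvec μ B j T)
          + (2 * B j m) • xvec μ B i T
          + μ i j • ((-μ i m) • ((-μ j m) • Kop m (Xop μ B j (xvec μ B i T))
            + (2 * B j m) • xvec μ B i T) + (2 * B i m) • xvec μ B j T)
        = ((-μ i m) * (-μ j m)) • (Kop m (Xop μ B i (xvec μ B j T))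
              + μ i j • Kop m (Xop μ B j (xvec μ B i T)))
          + ((-μ j m) * (2 * B i m) + μ i j * (2 * B i m)) • xvec μ B j T
          + ((2 * B j m) + μ i j * ((-μ i m) * (2 * B j m))) • xvec μ B i T := by
          module
      _ = ((-μ i m) * (-μ j m)) • Kop m ((2 * B i j) • evec T) := by
          rw [h2, h3, zero_smul, zero_smul, add_zero, add_zero, ← map_smul, ← map_add, hIH]
      _ = (2 * B i j) • evec (insert m T) := by
          rw [map_smul, Kop_evec, smul_smul, h1]
  · -- Case B : every element of S is ≥ i
    push_neg at hmin
    have hge : ∀ s ∈ S, i ≤ s := hmin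
    rcases eq_or_lt_of_le hij with rfl | hij'
    · -- i = j
      by_cases hiS : i ∈ S
      · set T := S.erase i with hTdef
        have hTi : ∀ t ∈ T, i < t := fun t ht =>
          lt_of_le_of_ne (hge t (Finset.mem_of_mem_erase ht))
            (Ne.symm (Finset.ne_of_mem_erase ht))
        have hSm : S = insert i T := (Finset.insert_erase hiS).symm
        rw [hSm, xvec_self μ B hTi, map_smul, Xop_evec, xvec_fresh μ B hTi, (hμ i i).2,
          one_smul, ← add_smul]
        congr 1
        ring
      · have hTi : ∀ t ∈ S, i < t := fun t ht =>
          lt_of_le_of_ne (hge t ht) (fun h => hiS (h ▸ ht))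
        rw [xvec_fresh μ B hTi, Xop_evec, xvec_self μ B hTi, (hμ i i).2, one_smul, ← add_smul]
        congr 1
        ring
    · -- i < j
      by_cases hiS : i ∈ S
      · -- Case B-b
        set T := S.erase i with hTdef
        have hTi : ∀ t ∈ T, i < t := fun t ht =>
          lt_of_le_of_ne (hge t (Finset.mem_of_mem_erase ht))
            (Ne.symm (Finset.ne_of_mem_erase ht))
        have hSm : S = insert i T := (Finset.insert_erase hiS).symm
        rw [hSm, xvec_insert_min μ B hij' hTi, xvec_self μ B hTi]
        rw [map_add, map_smul, map_smul, map_smul,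
          Xop_Kop_self μ B _ (xvec_mem_Pm μ B hij' hTi), Xop_evec, Xop_evec,
          xvec_fresh μ B hTi]
        have h5 : (-μ j i) * (B i i) + μ i j * (B i i) = 0 := by
          by_cases hb : B i i = 0
          · rw [hb]; ring
          · have hs := hstar i i hb j
            rw [hs]; ring
        have h4 : 2 * B j i = 2 * B i j := by rw [Bsymm μ B hμ hB hstar i j]
        calc (-μ j i) • (B i i) • xvec μ B j T + (2 * B j i) • evec (insert i T)
              + μ i j • (B i i) • xvec μ B j T
            = ((-μ j i) * (B i i) + μ i j * (B i i)) • xvec μ B j T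
              + (2 * B j i) • evec (insert i T) := by module
          _ = (2 * B i j) • evec (insert i T) := by
              rw [h5, zero_smul, zero_add, h4]
      · -- Case B-a
        have hTi : ∀ t ∈ S, i < t := fun t ht =>
          lt_of_le_of_ne (hge t ht) (fun h => hiS (h ▸ ht))
        rw [xvec_fresh μ B hTi, Xop_evec, xvec_insert_min μ B hij' hTi,
          ← Xop_eq_Kop μ B _ (xvec_mem_Pm μ B hij' hTi)]
        have hm1 : (1 : 𝕜) + μ i j * (-μ j i) = 0 := by
          linear_combination (-1 : 𝕜) * (hμ i j).1
        have hb1 : μ i j * (2 * B j i) = 2 * B i j := by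
          rw [hB i j]; ring
        calc Xop μ B i (xvec μ B j S)
              + μ i j • ((-μ j i) • Xop μ B i (xvec μ B j S) + (2 * B j i) • evec S)
            = ((1 : 𝕜) + μ i j * (-μ j i)) • Xop μ B i (xvec μ B j S)
              + (μ i j * (2 * B j i)) • evec S := by module
          _ = (2 * B i j) • evec S := by rw [hm1, zero_smul, zero_add, hb1]

lemma xrel (i j : Fin n) (S : Finset (Fin n)) :
    Xop μ B i (xvec μ B j S) + μ i j • Xop μ B j (xvec μ B i S) =
      (2 * B i j) • evec S := by
  rcases le_total i j with hij | hji
  · exact xrel_le μ B hμ hB hstar i j hij S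
  · have h := xrel_le μ B hμ hB hstar j i hji S
    have hm : μ i j * μ j i = 1 := (hμ i j).1
    have hb : μ i j * (2 * B j i) = 2 * B i j := by rw [hB i j]; ring
    calc Xop μ B i (xvec μ B j S) + μ i j • Xop μ B j (xvec μ B i S)
        = μ i j • (Xop μ B j (xvec μ B i S) + μ j i • Xop μ B i (xvec μ B j S))
          + ((1 : 𝕜) - μ i j * μ j i) • Xop μ B i (xvec μ B j S) := by module
      _ = (2 * B i j) • evec S := by
          rw [h, hm, sub_self, zero_smul, add_zero, smul_smul, hb]

end Rel
end SCL

namespace SCL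
open Finset Submodule

variable {𝕜 : Type*} [Field 𝕜] {n : ℕ} (μ B : Fin n → Fin n → 𝕜)

section Rep
variable (hμ : MulAntisym μ) (hB : MuSymm μ B) (hstar : StarCond μ B)
include hμ hB hstar

lemma Xop_rel (i j : Fin n) :
    Xop μ B i * Xop μ B j + μ i j • (Xop μ B j * Xop μ B i) =
      (2 * B i j) • (1 : Module.End 𝕜 (V 𝕜 n)) := by
  apply Finsupp.lhom_ext
  intro S a
  have h := xrel μ B hμ hB hstar i j S
  simp only [LinearMap.add_apply, LinearMap.smul_apply, Module.End.mul_apply,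
    Module.End.one_apply, Xop_single, map_smul]
  calc a • Xop μ B i (xvec μ B j S) + μ i j • a • Xop μ B j (xvec μ B i S)
      = a • (Xop μ B i (xvec μ B j S) + μ i j • Xop μ B j (xvec μ B i S)) := by
        rw [smul_add, smul_comm a]
    _ = a • ((2 * B i j) • evec S) := by rw [h]
    _ = (2 * B i j) • Finsupp.single S a := by
        rw [smul_comm, evec, Finsupp.smul_single, smul_eq_mul, mul_one]

noncomputable def rho : sCl 𝕜 n μ B →ₐ[𝕜] Module.End 𝕜 (V 𝕜 n) :=
  RingQuot.liftAlgHom 𝕜 ⟨FreeAlgebra.lift 𝕜 (fun i => Xop μ B i), by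
    rintro a b ⟨i, j⟩
    simp only [map_add, map_mul, map_smul, FreeAlgebra.lift_ι_apply, map_one]
    exact Xop_rel μ B hμ hB hstar i j⟩

lemma rho_gen (i : Fin n) : rho μ B hμ hB hstar (sClGen 𝕜 n μ B i) = Xop μ B i := by
  rw [sClGen, rho, RingQuot.liftAlgHom_mkAlgHom_apply, FreeAlgebra.lift_ι_apply]

lemma rho_list (L : List (Fin n)) (hL : L.Pairwise (· < ·)) :
    rho μ B hμ hB hstar ((L.map (sClGen 𝕜 n μ B)).prod) (evec ∅) = evec L.toFinset := by
  induction L with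
  | nil => simp [evec]
  | cons a L ihL =>
    obtain ⟨ha, hL'⟩ := List.pairwise_cons.mp hL
    rw [List.map_cons, List.prod_cons, map_mul, Module.End.mul_apply, ihL hL',
      rho_gen, Xop_evec, List.toFinset_cons]
    exact xvec_fresh μ B (fun t ht => ha t (List.mem_toFinset.mp ht))

lemma rho_mono (S : Finset (Fin n)) :
    rho μ B hμ hB hstar (mono μ B S) (evec ∅) = evec S := by
  rw [mono, rho_list μ B hμ hB hstar _ (S.sortedLT_sort.pairwise)]
  congr 1
  exact Finset.sort_toFinset _ _

lemma mono_linearIndependent : LinearIndependent 𝕜 (mono μ B (𝕜 := 𝕜) (n := n)) := by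
  let φ : sCl 𝕜 n μ B →ₗ[𝕜] V 𝕜 n :=
    (LinearMap.applyₗ (evec (𝕜 := 𝕜) (n := n) ∅)).comp (rho μ B hμ hB hstar).toLinearMap
  have hcomp : φ ∘ mono μ B = fun S => Finsupp.single S (1 : 𝕜) := by
    funext S
    simpa [φ, evec] using rho_mono μ B hμ hB hstar S
  have hind : LinearIndependent 𝕜 (fun S : Finset (Fin n) => Finsupp.single S (1 : 𝕜)) :=
    Finsupp.basisSingleOne.linearIndependent
  exact LinearIndependent.of_comp φ (hcomp ▸ hind)

end Rep
end SCL

namespace SCL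
open Finset Submodule

variable {𝕜 : Type*} [Field 𝕜] {n : ℕ} (μ B : Fin n → Fin n → 𝕜)

local notation "gen" => sClGen 𝕜 n μ B

lemma key_triple (a b : Fin n) (w : sCl 𝕜 n μ B) :
    gen a * (gen b * w) = (2 * B a b) • w - μ a b • (gen b * (gen a * w)) := by
  calc gen a * (gen b * w) = (gen a * gen b) * w := by rw [mul_assoc]
    _ = ((2 * B a b) • (1 : sCl 𝕜 n μ B) - μ a b • (gen b * gen a)) * w := by
        rw [gen_mul]
    _ = (2 * B a b) • w - μ a b • (gen b * (gen a * w)) := by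
        rw [sub_mul, smul_mul_assoc, one_mul, smul_mul_assoc, mul_assoc]

lemma e_triple (k c d : Fin n) :
    gen k * (gen c * gen d) = (2 * B k c) • gen d - (μ k c * (2 * B k d)) • gen c
      + (μ k c * μ k d) • ((gen c * gen d) * gen k) := by
  rw [key_triple μ B k c (gen d), gen_mul μ B k d, mul_sub, mul_smul_comm, mul_one,
    mul_smul_comm, ← mul_assoc]
  rw [smul_sub, smul_smul, smul_smul]
  abel

lemma dagger (i j k : Fin n) :
    (2 * B i j) • gen k = (μ k i * μ k j * (2 * B i j)) • gen k
      + (2 * B k i * (1 - μ i j * μ k j)) • gen j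
      + (2 * B k j * (μ i j - μ k i)) • gen i := by
  have hrel := gen_rel μ B i j
  calc (2 * B i j) • gen k
      = gen k * ((2 * B i j) • (1 : sCl 𝕜 n μ B)) := by
        rw [mul_smul_comm, mul_one]
    _ = gen k * (gen i * gen j + μ i j • (gen j * gen i)) := by rw [hrel]
    _ = gen k * (gen i * gen j) + μ i j • (gen k * (gen j * gen i)) := by
        rw [mul_add, mul_smul_comm]
    _ = ((2 * B k i) • gen j - (μ k i * (2 * B k j)) • gen i
          + (μ k i * μ k j) • ((gen i * gen j) * gen k))
        + μ i j • ((2 * B k j) • gen i - (μ k j * (2 * B k i)) • gen j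
          + (μ k j * μ k i) • ((gen j * gen i) * gen k)) := by
        rw [e_triple μ B k i j, e_triple μ B k j i]
    _ = (μ k i * μ k j) • ((gen i * gen j + μ i j • (gen j * gen i)) * gen k)
        + (2 * B k i * (1 - μ i j * μ k j)) • gen j
        + (2 * B k j * (μ i j - μ k i)) • gen i := by
        rw [add_mul, smul_mul_assoc]
        module
    _ = (μ k i * μ k j * (2 * B i j)) • gen k
        + (2 * B k i * (1 - μ i j * μ k j)) • gen j
        + (2 * B k j * (μ i j - μ k i)) • gen i := by
        rw [hrel, smul_mul_assoc, one_mul, smul_smul]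

lemma dagger' (i j k : Fin n) :
    (2 * B i j - μ k i * μ k j * (2 * B i j)) • gen k =
      (2 * B k i * (1 - μ i j * μ k j)) • gen j
      + (2 * B k j * (μ i j - μ k i)) • gen i := by
  have h := dagger μ B i j k
  linear_combination (norm := module) h

end SCL

namespace SCL
open Finset Submodule

variable {𝕜 : Type*} [Field 𝕜] {n : ℕ} (μ B : Fin n → Fin n → 𝕜)

local notation "gen" => sClGen 𝕜 n μ B

lemma gen_mem_span (hchar : (2:𝕜) ≠ 0) (hμ : MulAntisym μ) (hB : MuSymm μ B)
    (hns : ¬ StarCond μ B) :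
    ∃ (k a b : Fin n), a ≠ k ∧ b ≠ k ∧
      gen k ∈ span 𝕜 ({gen a, gen b} : Set (sCl 𝕜 n μ B)) := by
  rw [StarCond] at hns
  push_neg at hns
  obtain ⟨i, j, hbij, k, hμk⟩ := hns
  have hμij := (hμ i j).1
  by_cases hki : k = i
  · subst hki
    -- here `μ k j ≠ 1`
    have hne : μ k j ≠ 1 := by
      intro h
      exact hμk (by rw [h, (hμ k k).2])
    have hkj : j ≠ k := by
      intro h
      exact hne (h ▸ (hμ k k).2)
    have h := dagger' μ B k j k
    rw [(hμ k k).2] at h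
    have hq : (2 * 2) * (B k j * (1 - μ k j)) ≠ 0 :=
      mul_ne_zero (mul_ne_zero hchar hchar)
        (mul_ne_zero hbij (sub_ne_zero.mpr (Ne.symm hne)))
    have heq : ((2 * 2) * (B k j * (1 - μ k j))) • gen k
        = (2 * B k k * (1 - μ k j * μ k j)) • gen j := by
      linear_combination (norm := module) h
    refine ⟨k, j, j, hkj, hkj, ?_⟩
    have : gen k = ((2 * 2) * (B k j * (1 - μ k j)))⁻¹ •
        ((2 * B k k * (1 - μ k j * μ k j)) • gen j) := by
      rw [← heq, smul_smul, inv_mul_cancel₀ hq, one_smul]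
    rw [this]
    exact smul_mem _ _ (smul_mem _ _ (subset_span (by simp)))
  · by_cases hkj : k = j
    · subst hkj
      -- here `μ i k ≠ 1`
      have hne : μ i k ≠ 1 := by
        intro h
        exact hμk (by rw [h, (hμ k k).2])
      have hik : i ≠ k := by
        intro h
        exact hne (h ▸ (hμ k k).2)
      have hbki : B k i ≠ 0 := by
        intro h
        exact hbij (by rw [hB i k, h, mul_zero])
      have h := dagger' μ B i k k
      rw [(hμ k k).2] at h
      have hq : (2 * 2) * (B k i * (μ i k - 1)) ≠ 0 :=
        mul_ne_zero (mul_ne_zero hchar hchar)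
          (mul_ne_zero hbki (sub_ne_zero.mpr hne))
      have hb' : B i k = μ i k * B k i := hB i k
      have hm' : μ i k * μ k i = 1 := (hμ i k).1
      have hbv : (B i k) • gen k = (μ i k * B k i) • gen k := by rw [hb']
      have hmv : (μ i k * μ k i) • gen k = (1 : 𝕜) • gen k := by rw [hm']
      have heq : ((2 * 2) * (B k i * (μ i k - 1))) • gen k
          = (2 * B k k * (μ i k - μ k i)) • gen i := by
        linear_combination (norm := module) h + (2 * μ k i - 2) • hbv
          + (2 * B k i) • hmv
      refine ⟨k, i, i, hik, hik, ?_⟩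
      have : gen k = ((2 * 2) * (B k i * (μ i k - 1)))⁻¹ •
          ((2 * B k k * (μ i k - μ k i)) • gen i) := by
        rw [← heq, smul_smul, inv_mul_cancel₀ hq, one_smul]
      rw [this]
      exact smul_mem _ _ (smul_mem _ _ (subset_span (by simp)))
    · -- k distinct from i and j
      have hμki : μ k i ≠ 0 := by
        intro h
        have := (hμ k i).1
        rw [h, zero_mul] at this
        exact one_ne_zero this.symm
      have hne1 : 1 - μ k i * μ k j ≠ 0 := by
        intro h
        have h1 : μ k i * μ k j = 1 := by linear_combination -h
        have h2 : μ k i * μ i k = 1 := by linear_combination (hμ i k).1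
        exact hμk (mul_left_cancel₀ hμki (by rw [h2, h1]))
      have hq : (2 * B i j) * (1 - μ k i * μ k j) ≠ 0 :=
        mul_ne_zero (mul_ne_zero hchar hbij) hne1
      have h := dagger' μ B i j k
      have heq : ((2 * B i j) * (1 - μ k i * μ k j)) • gen k
          = (2 * B k i * (1 - μ i j * μ k j)) • gen j
            + (2 * B k j * (μ i j - μ k i)) • gen i := by
        linear_combination (norm := module) h
      refine ⟨k, j, i, fun h' => hkj h'.symm, fun h' => hki h'.symm, ?_⟩
      have : gen k = ((2 * B i j) * (1 - μ k i * μ k j))⁻¹ •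
          ((2 * B k i * (1 - μ i j * μ k j)) • gen j
            + (2 * B k j * (μ i j - μ k i)) • gen i) := by
        rw [← heq, smul_smul, inv_mul_cancel₀ hq, one_smul]
      rw [this]
      refine smul_mem _ _ (add_mem (smul_mem _ _ (subset_span (by simp)))
        (smul_mem _ _ (subset_span (by simp))))

end SCL

namespace SCL
open Finset Submodule

variable {𝕜 : Type*} [Field 𝕜] {n : ℕ} (μ B : Fin n → Fin n → 𝕜)

local notation "gen" => sClGen 𝕜 n μ B

lemma sCl_finite (hchar : (2:𝕜) ≠ 0) (hμ : MulAntisym μ) :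
    Module.Finite 𝕜 (sCl 𝕜 n μ B) := by
  constructor
  exact ⟨(Set.finite_range (mono μ B)).toFinset, by
    rw [Set.Finite.coe_toFinset]; exact span_mono_eq_top μ B hchar hμ⟩

lemma finrank_le (hchar : (2:𝕜) ≠ 0) (hμ : MulAntisym μ) :
    Module.finrank 𝕜 (sCl 𝕜 n μ B) ≤ 2 ^ n := by
  have h := finrank_le_of_span_eq_top (span_mono_eq_top μ B hchar hμ)
  rwa [Fintype.card_finset, Fintype.card_fin] at h

lemma finrank_ge (hchar : (2:𝕜) ≠ 0) (hμ : MulAntisym μ) (hB : MuSymm μ B)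
    (hstar : StarCond μ B) :
    2 ^ n ≤ Module.finrank 𝕜 (sCl 𝕜 n μ B) := by
  haveI := sCl_finite μ B hchar hμ
  have h := (mono_linearIndependent μ B hμ hB hstar).fintype_card_le_finrank
  rwa [Fintype.card_finset, Fintype.card_fin] at h

lemma finrank_le_sub (hchar : (2:𝕜) ≠ 0) (hμ : MulAntisym μ) (hB : MuSymm μ B)
    (hns : ¬ StarCond μ B) :
    Module.finrank 𝕜 (sCl 𝕜 n μ B) ≤ 2 ^ n - 1 := by
  obtain ⟨k, a, b, hak, hbk, hmem⟩ := gen_mem_span μ B hchar hμ hB hns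
  have hsub : ({gen a, gen b} : Set (sCl 𝕜 n μ B)) ⊆
      mono μ B '' {T : Finset (Fin n) | T ≠ {k}} := by
    rintro x (rfl | rfl)
    · exact ⟨{a}, by simp [Finset.singleton_inj, hak], mono_singleton μ B a⟩
    · exact ⟨{b}, by simp [Finset.singleton_inj, hbk], mono_singleton μ B b⟩
  have hW : span 𝕜 (mono μ B '' {T : Finset (Fin n) | T ≠ {k}}) = ⊤ := by
    rw [eq_top_iff, ← span_mono_eq_top μ B hchar hμ]
    apply span_le.mpr
    rintro v ⟨T, rfl⟩
    by_cases hT : T = {k}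
    · subst hT
      rw [mono_singleton μ B k]
      exact span_mono hsub hmem
    · exact subset_span ⟨T, hT, rfl⟩
  have hrange : Set.range (fun T : {T : Finset (Fin n) // T ≠ {k}} => mono μ B T.1)
      = mono μ B '' {T : Finset (Fin n) | T ≠ {k}} := by
    rw [Set.image_eq_range]
    rfl
  have h := finrank_le_of_span_eq_top (v := fun T : {T : Finset (Fin n) // T ≠ {k}} =>
    mono μ B T.1) (by rw [hrange]; exact hW)
  have hcard : Fintype.card {T : Finset (Fin n) // T ≠ {k}} = 2 ^ n - 1 := by
    rw [Fintype.card_subtype_compl, Fintype.card_subtype_eq, Fintype.card_finset,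
      Fintype.card_fin]
  rwa [hcard] at h

theorem main (hchar : (2:𝕜) ≠ 0) (hμ : MulAntisym μ) (hB : MuSymm μ B) :
    Module.finrank 𝕜 (sCl 𝕜 n μ B) = 2 ^ n ↔ StarCond μ B := by
  constructor
  · intro h
    by_contra hns
    have hle := finrank_le_sub μ B hchar hμ hB hns
    have hpos : (1:ℕ) ≤ 2 ^ n := Nat.one_le_two_pow
    omega
  · intro hstar
    exact le_antisymm (finrank_le μ B hchar hμ) (finrank_ge μ B hchar hμ hB hstar)

end SCL

/-- Theorem 3.10 (b) ⇔ (c): `sCl(μ, B)` has dimension exactly `2 ^ n` iff condition (★)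
holds. -/
theorem skewClifford_finrank_eq_iff_starCond
    (𝕜 : Type*) [Field 𝕜] (hchar : (2 : 𝕜) ≠ 0) (n : ℕ) (hn : 1 ≤ n)
    (μ B : Fin n → Fin n → 𝕜) (hμ : MulAntisym μ) (hB : MuSymm μ B) :
    Module.finrank 𝕜 (sCl 𝕜 n μ B) = 2 ^ n ↔ StarCond μ B :=
  SCL.main μ B hchar hμ hB
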